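/- For every integer m ≥ 1 and all z ∈ ℂ with z ≠ 0, φ_{mp}(z) − φ*_{mp}(z) = z^{(m−1)p/2} · U_{m−1}(Δ(z)/2) · (φ_p(z) − φ_p*(z)), where U_{m−1} is the Chebyshev polynomial of the second kind. (This is the identity form of Theorem 3.1: the zeros of φ_{mp} − φ*_{mp} are exactly the Dirichlet points, i.e., the zeros of φ_p − φ_p*, together with the points where U_{m−1}(Δ/2) vanishes.) -/

import Mathlib

open Polynomial Matrix

/-- `ρ_n = (1 - |α_n|²)^{1/2}`. -/
noncomputable def szRho (α : ℕ → ℂ) (n : ℕ) : ℝ := Real.sqrt (1 - ‖α n‖ ^ 2)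

/-- The one-step Szegő transfer matrix `A_k(z)`. -/
noncomputable def SzegoA (α : ℕ → ℂ) (k : ℕ) (z : ℂ) : Matrix (Fin 2) (Fin 2) ℂ :=
  ((szRho α k : ℂ))⁻¹ • !![z, -(starRingEnd ℂ (α k)); -z * α k, 1]

/-- The transfer matrix `T_n(z) = A_{n-1}(z) ⋯ A_0(z)`. -/
noncomputable def SzegoT (α : ℕ → ℂ) : ℕ → ℂ → Matrix (Fin 2) (Fin 2) ℂ
  | 0, _ => 1
  | n + 1, z => SzegoA α n z * SzegoT α n z

/-- The discriminant `Δ(z) = z^{-p/2} tr T_p(z)` (for `p` even, `z ≠ 0`). -/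
noncomputable def SzegoDisc (α : ℕ → ℂ) (p : ℕ) (z : ℂ) : ℂ :=
  (z ^ (p / 2))⁻¹ * (SzegoT α p z).trace

/-- **Theorem 3.1 (identity form).** For periodic Verblunsky coefficients of even
period `p`, `φ_{mp}(z) - φ*_{mp}(z) = z^{(m-1)p/2} U_{m-1}(Δ(z)/2) (φ_p(z) - φ_p*(z))`
for all `z ≠ 0` and `m ≥ 1`. -/
theorem opuc_periodic_phi_minus_phistar_chebyshev_identity
    (p : ℕ) (hp : 0 < p) (hpeven : Even p)
    (α : ℕ → ℂ)
    (hα : ∀ n, ‖α n‖ < 1)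
    (hper : ∀ n, α (n + p) = α n)
    (φ φs : ℕ → Polynomial ℂ)
    (hφ0 : φ 0 = 1)
    (hφrec : ∀ n, φ (n + 1) =
      C ((szRho α n : ℂ))⁻¹ * (X * φ n - C (starRingEnd ℂ (α n)) * φs n))
    (hφs : ∀ n, ∀ z : ℂ, z ≠ 0 →
      aeval z (φs n) = z ^ n * starRingEnd ℂ (aeval ((starRingEnd ℂ z)⁻¹) (φ n)))
    (m : ℕ) (hm : 1 ≤ m) (z : ℂ) (hz : z ≠ 0) :
    aeval z (φ (m * p)) - aeval z (φs (m * p)) =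
      z ^ ((m - 1) * p / 2) *
        (Polynomial.Chebyshev.U ℂ ((m : ℤ) - 1)).eval (SzegoDisc α p z / 2) *
        (aeval z (φ p) - aeval z (φs p)) := by
  -- basic facts about ρ
  have hρpos : ∀ n, (0:ℝ) < szRho α n := by
    intro n
    have h := hα n
    have h0 := norm_nonneg (α n)
    exact Real.sqrt_pos.mpr (by nlinarith)
  have hρ : ∀ n, ((szRho α n : ℂ)) ≠ 0 := by
    intro n
    exact_mod_cast (hρpos n).ne'
  have hρsq : ∀ n, ((szRho α n : ℂ))^2 = 1 - α n * starRingEnd ℂ (α n) := by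
    intro n
    have h0 : (0:ℝ) ≤ 1 - ‖α n‖^2 := by nlinarith [hα n, norm_nonneg (α n)]
    have h1 : (szRho α n)^2 = 1 - ‖α n‖^2 := Real.sq_sqrt h0
    have h2 : ((szRho α n : ℂ))^2 = ((1 - ‖α n‖^2 : ℝ) : ℂ) := by
      rw [← h1]; push_cast; ring
    rw [h2, Complex.mul_conj']
    push_cast; ring
  -- φ* recursion at the point z
  have hconjz : (starRingEnd ℂ) z ≠ 0 := by
    simpa using hz
  have hφsrec : ∀ n, aeval z (φs (n+1)) =
      ((szRho α n : ℂ))⁻¹ * (aeval z (φs n) - z * α n * aeval z (φ n)) := by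
    intro n
    set w := ((starRingEnd ℂ) z)⁻¹ with hw
    have hwne : w ≠ 0 := inv_ne_zero hconjz
    have hcw : (starRingEnd ℂ) w = z⁻¹ := by
      rw [hw, map_inv₀, Complex.conj_conj]
    have h1 := hφs (n+1) z hz
    have h2 : aeval w (φ (n+1)) =
        ((szRho α n : ℂ))⁻¹ * (w * aeval w (φ n) - starRingEnd ℂ (α n) * aeval w (φs n)) := by
      rw [hφrec n]; simp
    have h3 := hφs n w hwne
    rw [hcw, inv_inv] at h3
    have h4 := hφs n z hz
    rw [h1, h2, h3]
    simp only [_root_.map_mul, _root_.map_sub, map_inv₀, map_pow, Complex.conj_conj,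
      Complex.conj_ofReal, hcw]
    rw [h4]
    have e1 : z ^ (n+1) * z⁻¹ = z ^ n := by
      rw [pow_succ, mul_assoc, mul_inv_cancel₀ hz, mul_one]
    have e2 : z ^ (n+1) * z⁻¹ ^ n = z := by
      rw [inv_pow, pow_succ, mul_comm (z ^ n) z, mul_assoc, mul_inv_cancel₀ (pow_ne_zero n hz), mul_one]
    linear_combination ((szRho α n : ℂ))⁻¹ * (starRingEnd ℂ) ((aeval w) (φ n)) * e1 -
      ((szRho α n : ℂ))⁻¹ * α n * (aeval z (φ n)) * e2
  -- evaluation of φ, φs via transfer matrices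
  have heval : ∀ n, aeval z (φ n) = SzegoT α n z 0 0 + SzegoT α n z 0 1 ∧
      aeval z (φs n) = SzegoT α n z 1 0 + SzegoT α n z 1 1 := by
    intro n
    induction n with
    | zero =>
      constructor
      · simp [SzegoT, hφ0, Matrix.one_apply]
      · rw [hφs 0 z hz]; simp [SzegoT, hφ0, Matrix.one_apply]
    | succ n ih =>
      have hT : SzegoT α (n+1) z = SzegoA α n z * SzegoT α n z := rfl
      constructor
      · rw [hφrec n]
        simp only [_root_.map_mul, _root_.map_sub, aeval_C, aeval_X]
        rw [ih.1, ih.2, hT]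
        simp [SzegoA, Matrix.mul_apply, Fin.sum_univ_two]
        ring
      · rw [hφsrec n, ih.1, ih.2, hT]
        simp [SzegoA, Matrix.mul_apply, Fin.sum_univ_two]
        ring
  -- determinant facts
  have hdetA : ∀ k, (SzegoA α k z).det = z := by
    intro k
    rw [SzegoA, Matrix.det_smul, Matrix.det_fin_two_of]
    have h : z * 1 - -(starRingEnd ℂ) (α k) * (-z * α k) = z * ((szRho α k : ℂ))^2 := by
      rw [hρsq k]; ring
    rw [h]
    simp only [Fintype.card_fin]
    field_simp
    exact div_self (hρ k)
  have hdetT : ∀ n, (SzegoT α n z).det = z ^ n := by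
    intro n
    induction n with
    | zero => simp [SzegoT]
    | succ n ih =>
      have hT : SzegoT α (n+1) z = SzegoA α n z * SzegoT α n z := rfl
      rw [hT, Matrix.det_mul, hdetA, ih, pow_succ]; ring
  -- periodicity
  have hTper : ∀ n, SzegoT α (n + p) z = SzegoT α n z * SzegoT α p z := by
    intro n
    induction n with
    | zero => simp [SzegoT]
    | succ n ih =>
      rw [show n + 1 + p = (n + p) + 1 by omega]
      have h1 : SzegoT α ((n + p) + 1) z = SzegoA α (n + p) z * SzegoT α (n + p) z := rfl
      have h2 : SzegoA α (n + p) z = SzegoA α n z := by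
        simp only [SzegoA, szRho, hper n]
      rw [h1, h2, ih]
      have h3 : SzegoT α (n+1) z = SzegoA α n z * SzegoT α n z := rfl
      rw [h3, Matrix.mul_assoc]
  set B := SzegoT α p z with hB
  have hTpow : ∀ k, SzegoT α (k * p) z = B ^ k := by
    intro k
    induction k with
    | zero => simp [SzegoT]
    | succ k ih =>
      rw [show (k+1) * p = k * p + p by ring, hTper, ih, pow_succ]
  -- Cayley-Hamilton
  have hCH : B * B = B.trace • B - (z ^ p) • (1 : Matrix (Fin 2) (Fin 2) ℂ) := by
    have hd : z ^ p = B.det := (hdetT p).symm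
    rw [hd]
    ext i j
    fin_cases i <;> fin_cases j <;>
      simp [Matrix.mul_apply, Fin.sum_univ_two, Matrix.trace_fin_two, Matrix.det_fin_two,
        Matrix.one_apply] <;> ring
  set t := B.trace with ht
  set q := p / 2 with hq
  have h2q : 2 * q = p := Nat.two_mul_div_two_of_even hpeven
  have htδ : t = z ^ q * SzegoDisc α p z := by
    rw [SzegoDisc, ← hq, ← hB, ← ht]
    field_simp
  set δ := SzegoDisc α p z with hδ
  set f : ℕ → ℂ := fun n => ((B^n) 0 0 + (B^n) 0 1) - ((B^n) 1 0 + (B^n) 1 1) with hf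
  set s : ℕ → ℂ := fun n => z^(n*q) * (Polynomial.Chebyshev.U ℂ (n:ℤ)).eval (δ/2) with hs
  have hf0 : f 0 = 0 := by simp [hf, Matrix.one_apply]
  have hfrec : ∀ n, f (n+2) = t * f (n+1) - z^p * f n := by
    intro n
    have hpow : B^(n+2) = B^n * (B * B) := by
      rw [show n + 2 = n + 1 + 1 from rfl, pow_succ, pow_succ, Matrix.mul_assoc]
    have hp1 : B ^ (n+1) = B^n * B := pow_succ B n
    simp only [hf, hpow, hCH, Matrix.mul_sub, Matrix.mul_smul, Matrix.mul_one]
    simp only [Matrix.sub_apply, Matrix.smul_apply, smul_eq_mul]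
    rw [hp1]
    simp [Matrix.mul_apply, Fin.sum_univ_two]
    ring
  have hs0 : s 0 = 1 := by
    simp [hs, Polynomial.Chebyshev.U_zero]
  have hs1 : s 1 = t := by
    simp only [hs, Nat.cast_one, Polynomial.Chebyshev.U_one, one_mul]
    rw [htδ]
    simp only [Polynomial.eval_mul, Polynomial.eval_ofNat, Polynomial.eval_X]
    ring
  have hsrec : ∀ n : ℕ, s (n+2) = t * s (n+1) - z^p * s n := by
    intro n
    have hc2 : ((n+2 : ℕ) : ℤ) = (n:ℤ) + 2 := by push_cast; ring
    have hc1 : ((n+1 : ℕ) : ℤ) = (n:ℤ) + 1 := by push_cast; ring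
    simp only [hs, hc2, hc1, Polynomial.Chebyshev.U_add_two]
    rw [htδ, ← h2q]
    simp only [Polynomial.eval_sub, Polynomial.eval_mul, Polynomial.eval_ofNat,
      Polynomial.eval_X]
    rw [show (n+2)*q = q + (q + n*q) by ring, show (n+1)*q = q + n*q by ring,
      show 2*q = q + q from two_mul q, pow_add, pow_add, pow_add]
    ring
  -- main two-step induction
  have key : ∀ n : ℕ, f (n+1) = s n * f 1 ∧ f (n+2) = s (n+1) * f 1 := by
    intro n
    induction n with
    | zero =>
      constructor
      · rw [hs0, one_mul]
      · rw [hfrec 0, hf0, hs1]; ring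
    | succ n ih =>
      refine ⟨ih.2, ?_⟩
      rw [show n + 1 + 2 = n + 3 from rfl, show n + 3 = (n+1) + 2 from rfl]
      rw [hfrec (n+1), ih.1, ih.2, hsrec n]
      ring
  -- assemble
  obtain ⟨n, rfl⟩ : ∃ n, m = n + 1 := ⟨m - 1, (Nat.succ_pred_eq_of_pos hm).symm⟩
  have hL : aeval z (φ ((n+1) * p)) - aeval z (φs ((n+1) * p)) = f (n+1) := by
    have h := heval ((n+1) * p)
    rw [h.1, h.2, hTpow (n+1)]
  have hf1 : f 1 = aeval z (φ p) - aeval z (φs p) := by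
    have h := heval p
    rw [h.1, h.2]
    simp [hf, hB]
  have hexp : (n + 1 - 1) * p / 2 = n * q := by
    rw [hq]
    simp only [Nat.add_sub_cancel]
    exact Nat.mul_div_assoc n hpeven.two_dvd
  have hidx : ((n+1 : ℕ) : ℤ) - 1 = (n : ℤ) := by push_cast; ring
  rw [hL, (key n).1, hexp, hidx, hf1]
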